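/- Let G be a finite group, ω a 3-cocycle on G with values in k*, and for a ∈ G define α_a(x,y) = ω(a,x,y)ω(x,y,a)/ω(x,a,y) for x,y ∈ C_G(a). Then α_a is a 2-cocycle on the centralizer C_G(a). -/
import Mathlib


/-- Let `G` be a finite group and `ω` a (normalized) 3-cocycle on `G` with values in
`k*`, `k` an algebraically closed field of characteristic zero.  For `a ∈ G` define
`α_a(x,y) = ω(a,x,y)·ω(x,y,a)·ω(x,a,y)⁻¹`.  Then `α_a` is a 2-cocycle on the
centralizer `C_G(a)`:
`α_a(x,y)·α_a(xy,z) = α_a(y,z)·α_a(x,yz)` for all `x, y, z ∈ C_G(a)`. -/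
theorem stmt16 {G : Type} [Group G] {k : Type} [Field k] [IsAlgClosed k] [CharZero k]
    (ω : G → G → G → kˣ)
    (hω : ∀ a b c d : G,
      ω b c d * ω a (b * c) d * ω a b c = ω (a * b) c d * ω a b (c * d))
    (hnorm : ∀ a b : G, ω 1 a b = 1 ∧ ω a 1 b = 1 ∧ ω a b 1 = 1)
    (a : G) :
    ∀ x y z : G, x ∈ Subgroup.centralizer {a} → y ∈ Subgroup.centralizer {a} →
      z ∈ Subgroup.centralizer {a} →
      (ω a x y * ω x y a * (ω x a y)⁻¹) *
          (ω a (x * y) z * ω (x * y) z a * (ω (x * y) a z)⁻¹) =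
        (ω a y z * ω y z a * (ω y a z)⁻¹) *
          (ω a x (y * z) * ω x (y * z) a * (ω x a (y * z))⁻¹) := by
  intro x y z hx hy hz
  rw [Subgroup.mem_centralizer_singleton_iff] at hx hy hz
  -- four instances of the 3-cocycle condition
  have h1 := hω a x y z
  have h2 := hω x a y z
  have h3 := hω x y a z
  have h4 := hω x y z a
  -- normalize: put `a` on the right in all products involving `a`
  rw [← hx] at h1
  rw [← hy] at h2
  rw [← hz] at h3
  -- pass to equations in `k`
  have H1 := congrArg Units.val h1
  have H2 := congrArg Units.val h2
  have H3 := congrArg Units.val h3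
  have H4 := congrArg Units.val h4
  push_cast at H1 H2 H3 H4
  rw [Units.ext_iff]
  push_cast
  set A1 : k := ((ω a x y : kˣ) : k)
  set A2 : k := ((ω a (x * y) z : kˣ) : k)
  set A3 : k := ((ω a y z : kˣ) : k)
  set A4 : k := ((ω a x (y * z) : kˣ) : k)
  set B1 : k := ((ω x y a : kˣ) : k)
  set B2 : k := ((ω (x * y) z a : kˣ) : k)
  set B3 : k := ((ω y z a : kˣ) : k)
  set B4 : k := ((ω x (y * z) a : kˣ) : k)
  set C1 : k := ((ω x a y : kˣ) : k)
  set C2 : k := ((ω (x * y) a z : kˣ) : k)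
  set C3 : k := ((ω y a z : kˣ) : k)
  set C4 : k := ((ω x a (y * z) : kˣ) : k)
  set P : k := ((ω x y z : kˣ) : k)
  set Q : k := ((ω (x * a) y z : kˣ) : k)
  set R : k := ((ω x (y * a) z : kˣ) : k)
  set S : k := ((ω x y (z * a) : kˣ) : k)
  have key : (A1 * A2 * B1 * B2 * C3 * C4) * (P * Q * R * S) =
      (A3 * A4 * B3 * B4 * C1 * C2) * (P * Q * R * S) := by
    linear_combination (C3 * R * B1 * Q * C4 * B2 * S) * H1
      - (Q * A4 * C2 * S * B2 * S) * H2
      + (Q * A4 * Q * C4 * B2 * S) * H3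
      - (Q * A4 * C2 * S * A3 * R * C1) * H4
  have hM : (P * Q * R * S) ≠ 0 := by
    apply mul_ne_zero
    apply mul_ne_zero
    apply mul_ne_zero
    all_goals exact Units.ne_zero _
  have G0 : A1 * A2 * B1 * B2 * C3 * C4 = A3 * A4 * B3 * B4 * C1 * C2 :=
    mul_right_cancel₀ hM key
  have n1 : C1 ≠ 0 := Units.ne_zero _
  have n2 : C2 ≠ 0 := Units.ne_zero _
  have n3 : C3 ≠ 0 := Units.ne_zero _
  have n4 : C4 ≠ 0 := Units.ne_zero _
  field_simp
  linear_combination G0
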